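/- Let V be a nonzero finite-dimensional real vector space and C ⊆ V a closed convex cone that is strictly convex (C ∩ (−C) = {0}) and generates V as a vector space. Let φ : V → V be a linear map with φ(C) ⊆ C, let B : V × V → ℝ be a bilinear form, and let d ≥ 0 be a real number such that B(φ(x), φ(y)) = d·B(x, y) for all x, y ∈ V. Suppose there exists w ∈ V such that B(v, w) ≠ 0 for every v ∈ C with v ≠ 0. Then d ≤ ρ(φ)², where ρ(φ) is the spectral radius of φ. (Combined abstract form of Lemma 2.9 of the paper: Perron–Frobenius produces a nonzero nef eigenvector L with φ(L) = ρ(φ)·L, and pairing against an ample class yields deg(f) ≤ ρ(f*)².) -/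

import Mathlib

set_option maxHeartbeats 1000000

open Polynomial Filter
open scoped Matrix ENNReal NNReal Topology

attribute [local instance] Matrix.linftyOpNormedAddCommGroup Matrix.linftyOpNormedRing
  Matrix.linftyOpNormedAlgebra Matrix.linftyOpNormedSpace

/-- Every element of the spectrum of a complex matrix is a root of its charpoly. -/
lemma mem_spectrum_isRoot_charpoly {n : Type*} [Fintype n] [DecidableEq n]
    (M : Matrix n n ℂ) {μ : ℂ} (hμ : μ ∈ spectrum ℂ M) : M.charpoly.IsRoot μ := by
  rw [spectrum.mem_iff] at hμ
  have heval : M.charpoly.eval μ = (Matrix.scalar n μ - M).det := by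
    rw [Matrix.charpoly, eval_det, Matrix.matPolyEquiv_charmatrix]
    simp
  have halg : algebraMap ℂ (Matrix n n ℂ) μ = Matrix.scalar n μ := by
    rw [Matrix.algebraMap_eq_diagonal, Matrix.scalar_apply]
    congr 1
  have hdet : (Matrix.scalar n μ - M).det = 0 := by
    by_contra h
    exact hμ (halg ▸ (Matrix.isUnit_iff_isUnit_det _).mpr (isUnit_iff_ne_zero.mpr h))
  simpa [Polynomial.IsRoot, heval] using hdet

/-- The `linfty` operator norm is unchanged under entrywise `ℝ → ℂ` coercion. -/
lemma linfty_norm_map_complex {n : Type*} [Fintype n] (M : Matrix n n ℝ) :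
    ‖M.map (algebraMap ℝ ℂ)‖ = ‖M‖ := by
  have h : ‖M.map (algebraMap ℝ ℂ)‖₊ = ‖M‖₊ := by
    rw [Matrix.linfty_opNNNorm_def, Matrix.linfty_opNNNorm_def]
    refine Finset.sup_congr rfl fun i _ => Finset.sum_congr rfl fun j _ => ?_
    simp [Matrix.map_apply]
  rw [← coe_nnnorm, ← coe_nnnorm, h]

/-- The spectral radius of a linear endomorphism of a finite-dimensional real vector
space: the maximum of `|μ|` over the complex roots `μ` of its characteristic polynomial. -/
noncomputable def realSpectralRadius {V : Type*} [AddCommGroup V] [Module ℝ V]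
    [FiniteDimensional ℝ V] (φ : V →ₗ[ℝ] V) : ℝ :=
  sSup {r : ℝ | ∃ μ : ℂ, (φ.charpoly.map (algebraMap ℝ ℂ)).IsRoot μ ∧ ‖μ‖ = r}

/-- Combined abstract form of Lemma 2.9: if `φ` preserves a closed strictly convex
generating cone `C`, a bilinear form `B` transforms under `φ` by a factor `d ≥ 0`, and
some `w` pairs nontrivially with every nonzero element of `C`, then `d ≤ ρ(φ)²`. -/
theorem degree_le_spectralRadius_sq_of_cone
    {V : Type*} [AddCommGroup V] [Module ℝ V] [FiniteDimensional ℝ V] [Nontrivial V]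
    [TopologicalSpace V] [IsTopologicalAddGroup V] [ContinuousSMul ℝ V] [T2Space V]
    (C : Set V) (hclosed : IsClosed C)
    (hadd : ∀ x ∈ C, ∀ y ∈ C, x + y ∈ C)
    (hsmul : ∀ x ∈ C, ∀ t : ℝ, 0 ≤ t → t • x ∈ C)
    (hpointed : C ∩ (-C) = {0})
    (hspan : Submodule.span ℝ C = ⊤)
    (φ : V →ₗ[ℝ] V) (hφC : ∀ x ∈ C, φ x ∈ C)
    (B : V →ₗ[ℝ] V →ₗ[ℝ] ℝ) (d : ℝ) (hd : 0 ≤ d)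
    (hB : ∀ x y : V, B (φ x) (φ y) = d * B x y)
    (hw : ∃ w : V, ∀ v ∈ C, v ≠ 0 → B v w ≠ 0) :
    d ≤ (realSpectralRadius φ) ^ 2 := by
  classical
  obtain ⟨w, hw⟩ := hw
  -- a nonzero element of the cone
  obtain ⟨u, huC, hu0⟩ : ∃ u ∈ C, u ≠ 0 := by
    by_contra h
    push_neg at h
    have hbot : Submodule.span ℝ C ≤ ⊥ :=
      Submodule.span_le.mpr fun x hx => by simpa using h x hx
    rw [hspan] at hbot
    obtain ⟨x, hx⟩ := exists_ne (0 : V)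
    exact hx ((Submodule.mem_bot ℝ).mp (hbot Submodule.mem_top))
  have hc : B u w ≠ 0 := hw u huC hu0
  set c : ℝ := B u w with hcdef
  -- iteration identity
  have hiter : ∀ k : ℕ, B ((φ ^ k) u) ((φ ^ k) w) = d ^ k * c := by
    intro k
    induction k with
    | zero => simp [hcdef]
    | succ k ih =>
        have h1 : (φ ^ (k + 1)) u = φ ((φ ^ k) u) := by
          rw [pow_succ']; rfl
        have h2 : (φ ^ (k + 1)) w = φ ((φ ^ k) w) := by
          rw [pow_succ']; rfl
        rw [h1, h2, hB, ih, pow_succ]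
        ring
  -- matrix setup
  set m := Module.finrank ℝ V with hm
  let b : Module.Basis (Fin m) ℝ V := Module.finBasis ℝ V
  set A : Matrix (Fin m) (Fin m) ℝ := LinearMap.toMatrix b b φ with hA
  set Ac : Matrix (Fin m) (Fin m) ℂ := A.map (algebraMap ℝ ℂ) with hAc
  have hAck : ∀ k : ℕ, Ac ^ k = (A ^ k).map (algebraMap ℝ ℂ) := by
    intro k
    simpa [hAc, RingHom.mapMatrix_apply] using
      (map_pow ((algebraMap ℝ ℂ).mapMatrix) A k).symm
  -- powers act on coordinates
  have hrep : ∀ (k : ℕ) (x : V), (A ^ k) *ᵥ (b.repr x) = b.repr ((φ ^ k) x) := by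
    intro k
    induction k with
    | zero => intro x; simp [Matrix.one_mulVec]
    | succ k ih =>
        intro x
        have hx : (φ ^ (k + 1)) x = (φ ^ k) (φ x) := by rw [pow_succ]; rfl
        rw [hx, ← ih (φ x), ← LinearMap.toMatrix_mulVec_repr b b φ x,
          Matrix.mulVec_mulVec, ← pow_succ, hA]
  -- the charpoly over ℂ
  set p : Polynomial ℂ := φ.charpoly.map (algebraMap ℝ ℂ) with hp
  have hAcp : Ac.charpoly = p := by
    rw [hAc, Matrix.charpoly_map, hA, LinearMap.charpoly_toMatrix]
  have hp0 : p ≠ 0 := (φ.charpoly_monic.map (algebraMap ℝ ℂ)).ne_zero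
  -- the set defining the real spectral radius
  set S : Set ℝ := {r : ℝ | ∃ μ : ℂ, p.IsRoot μ ∧ ‖μ‖ = r} with hS
  have hSimage : S = (fun μ : ℂ => ‖μ‖) '' {μ : ℂ | p.IsRoot μ} := by
    ext r; simp [hS, Set.mem_image]
  have hSfin : S.Finite := by
    rw [hSimage]; exact (Polynomial.finite_setOf_isRoot hp0).image _
  have hSbdd : BddAbove S := hSfin.bddAbove
  have hSne : S.Nonempty := by
    have hdeg : p.degree ≠ 0 := by
      have hnd : p.natDegree = m := by
        rw [hp, Polynomial.natDegree_map_eq_of_injective (algebraMap ℝ ℂ).injective,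
          LinearMap.charpoly_natDegree]
      have hm0 : 0 < m := Module.finrank_pos
      intro h
      have h0 : p.natDegree = 0 := Polynomial.natDegree_eq_zero_iff_degree_le_zero.mpr h.le
      omega
    obtain ⟨μ, hμ⟩ := IsAlgClosed.exists_root p hdeg
    exact ⟨‖μ‖, μ, hμ, rfl⟩
  set r : ℝ := realSpectralRadius φ with hr
  have hrS : r = sSup S := rfl
  have hr0 : 0 ≤ r := by
    obtain ⟨x, μ, hμroot, hμx⟩ := hSne
    have h1 : x ≤ r := le_csSup hSbdd ⟨μ, hμroot, hμx⟩
    have h2 : (0 : ℝ) ≤ x := hμx ▸ norm_nonneg μ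
    linarith
  -- spectral radius bound
  have hspec : spectralRadius ℂ Ac ≤ ENNReal.ofReal r := by
    rw [spectralRadius]
    refine iSup₂_le fun μ hμ => ?_
    have hroot : p.IsRoot μ := hAcp ▸ mem_spectrum_isRoot_charpoly Ac hμ
    have habs : ‖μ‖ ≤ r := le_csSup hSbdd ⟨μ, hroot, rfl⟩
    calc (‖μ‖₊ : ℝ≥0∞) = ENNReal.ofReal ‖μ‖ := (ofReal_norm μ).symm
      _ ≤ ENNReal.ofReal r := ENNReal.ofReal_le_ofReal habs
  -- bilinear form in coordinates
  set β : Matrix (Fin m) (Fin m) ℝ := Matrix.of fun i j => B (b i) (b j) with hβ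
  have hBrep : ∀ x y : V, B x y = ∑ i, ∑ j, b.repr x i * (b.repr y j * β i j) := by
    intro x y
    conv_lhs => rw [← b.sum_repr x, ← b.sum_repr y]
    simp only [map_sum, map_smul, LinearMap.coe_sum, Finset.sum_apply,
      LinearMap.smul_apply, smul_eq_mul, Finset.mul_sum]
    rw [Finset.sum_comm]
    refine Finset.sum_congr rfl fun i _ => Finset.sum_congr rfl fun j _ => ?_
    rw [hβ]
    simp only [Matrix.of_apply]
    ring
  set K : ℝ := (∑ i, ∑ j, |β i j|) * (‖(b.repr u : Fin m → ℝ)‖ * ‖(b.repr w : Fin m → ℝ)‖)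
    with hK
  have hK0 : 0 ≤ K := by
    apply mul_nonneg
    · exact Finset.sum_nonneg fun i _ => Finset.sum_nonneg fun j _ => abs_nonneg _
    · positivity
  -- key upper bound
  have hbound : ∀ k : ℕ, d ^ k * |c| ≤ K * (‖Ac ^ k‖ * ‖Ac ^ k‖) := by
    intro k
    have hnorm : ‖Ac ^ k‖ = ‖A ^ k‖ := by rw [hAck]; exact linfty_norm_map_complex _
    have hxb : ∀ i, |b.repr ((φ ^ k) u) i| ≤ ‖A ^ k‖ * ‖(b.repr u : Fin m → ℝ)‖ := by
      intro i
      have h1 : |((A ^ k) *ᵥ (b.repr u : Fin m → ℝ)) i|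
          ≤ ‖(A ^ k) *ᵥ (b.repr u : Fin m → ℝ)‖ := by
        simpa [Real.norm_eq_abs] using norm_le_pi_norm ((A ^ k) *ᵥ (b.repr u : Fin m → ℝ)) i
      have h2 := Matrix.linfty_opNorm_mulVec (A ^ k) (b.repr u : Fin m → ℝ)
      calc |b.repr ((φ ^ k) u) i| = |((A ^ k) *ᵥ (b.repr u : Fin m → ℝ)) i| := by
            rw [hrep]
        _ ≤ _ := h1.trans h2
    have hyb : ∀ j, |b.repr ((φ ^ k) w) j| ≤ ‖A ^ k‖ * ‖(b.repr w : Fin m → ℝ)‖ := by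
      intro j
      have h1 : |((A ^ k) *ᵥ (b.repr w : Fin m → ℝ)) j|
          ≤ ‖(A ^ k) *ᵥ (b.repr w : Fin m → ℝ)‖ := by
        simpa [Real.norm_eq_abs] using norm_le_pi_norm ((A ^ k) *ᵥ (b.repr w : Fin m → ℝ)) j
      have h2 := Matrix.linfty_opNorm_mulVec (A ^ k) (b.repr w : Fin m → ℝ)
      calc |b.repr ((φ ^ k) w) j| = |((A ^ k) *ᵥ (b.repr w : Fin m → ℝ)) j| := by
            rw [hrep]
        _ ≤ _ := h1.trans h2
    rw [hnorm, ← abs_of_nonneg (pow_nonneg hd k), ← abs_mul, ← hiter k, hBrep]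
    calc |∑ i, ∑ j, b.repr ((φ ^ k) u) i * (b.repr ((φ ^ k) w) j * β i j)|
        ≤ ∑ i, ∑ j, |b.repr ((φ ^ k) u) i * (b.repr ((φ ^ k) w) j * β i j)| :=
          (Finset.abs_sum_le_sum_abs _ _).trans
            (Finset.sum_le_sum fun i _ => Finset.abs_sum_le_sum_abs _ _)
      _ ≤ ∑ i, ∑ j, (‖A ^ k‖ * ‖(b.repr u : Fin m → ℝ)‖) *
            ((‖A ^ k‖ * ‖(b.repr w : Fin m → ℝ)‖) * |β i j|) := by
          refine Finset.sum_le_sum fun i _ => Finset.sum_le_sum fun j _ => ?_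
          rw [abs_mul, abs_mul]
          have h1 := hxb i
          have h2 := hyb j
          have hNU : (0:ℝ) ≤ ‖A ^ k‖ * ‖(b.repr u : Fin m → ℝ)‖ :=
            le_trans (abs_nonneg _) h1
          calc |b.repr ((φ ^ k) u) i| * (|b.repr ((φ ^ k) w) j| * |β i j|)
              ≤ (‖A ^ k‖ * ‖(b.repr u : Fin m → ℝ)‖) *
                (|b.repr ((φ ^ k) w) j| * |β i j|) :=
                mul_le_mul_of_nonneg_right h1 (by positivity)
            _ ≤ (‖A ^ k‖ * ‖(b.repr u : Fin m → ℝ)‖) *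
                ((‖A ^ k‖ * ‖(b.repr w : Fin m → ℝ)‖) * |β i j|) :=
                mul_le_mul_of_nonneg_left
                  (mul_le_mul_of_nonneg_right h2 (abs_nonneg _)) hNU
      _ = K * (‖A ^ k‖ * ‖A ^ k‖) := by
          simp only [← Finset.mul_sum]
          rw [hK]
          ring
  -- conclusion
  by_contra hlt
  push_neg at hlt
  have hdpos : 0 < d := lt_of_le_of_lt (by positivity) hlt
  set s : ℝ := Real.sqrt ((r ^ 2 + d) / 2) with hs
  have hs2 : s ^ 2 = (r ^ 2 + d) / 2 := Real.sq_sqrt (by positivity)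
  have hs0 : 0 ≤ s := Real.sqrt_nonneg _
  have hspos : 0 < s := by nlinarith
  have hrs : r < s := by nlinarith
  have hs2d : s ^ 2 < d := by nlinarith
  have hgel : limsup (fun k : ℕ => (‖Ac ^ k‖₊ : ℝ≥0∞) ^ (1 / (k : ℝ))) atTop
      < ENNReal.ofReal s :=
    lt_of_le_of_lt (spectrum.limsup_pow_nnnorm_pow_one_div_le_spectralRadius Ac)
      (lt_of_le_of_lt hspec ((ENNReal.ofReal_lt_ofReal_iff hspos).mpr hrs))
  have hev : ∀ᶠ k : ℕ in atTop, (‖Ac ^ k‖₊ : ℝ≥0∞) ^ (1 / (k : ℝ)) < ENNReal.ofReal s :=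
    Filter.eventually_lt_of_limsup_lt hgel
  have hev2 : ∀ᶠ k : ℕ in atTop, ‖Ac ^ k‖ ≤ s ^ k := by
    filter_upwards [hev, eventually_ge_atTop 1] with k hk hk1
    have hk0 : (k : ℝ) ≠ 0 := Nat.cast_ne_zero.mpr (by omega)
    have h1 : ((‖Ac ^ k‖₊ : ℝ≥0∞) ^ (1 / (k : ℝ))) ^ (k : ℝ)
        ≤ (ENNReal.ofReal s) ^ (k : ℝ) := ENNReal.rpow_le_rpow hk.le (Nat.cast_nonneg k)
    rw [← ENNReal.rpow_mul, one_div, inv_mul_cancel₀ hk0, ENNReal.rpow_one,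
      ENNReal.rpow_natCast, ← ENNReal.ofReal_pow hs0] at h1
    have h2 := ENNReal.toReal_mono (by simp) h1
    simpa [ENNReal.toReal_ofReal (by positivity : (0:ℝ) ≤ s ^ k)] using h2
  have hq : 1 < d / s ^ 2 := (one_lt_div (by positivity)).mpr hs2d
  have hgrow : ∀ᶠ k : ℕ in atTop, K / |c| < (d / s ^ 2) ^ k :=
    (tendsto_pow_atTop_atTop_of_one_lt hq).eventually_gt_atTop _
  obtain ⟨k, hk1, hk2⟩ := (hev2.and hgrow).exists
  have hcpos : 0 < |c| := abs_pos.mpr hc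
  have hskpos : 0 < (s ^ 2) ^ k := by positivity
  have h4 : d ^ k * |c| ≤ K * ((s ^ 2) ^ k) := by
    calc d ^ k * |c| ≤ K * (‖Ac ^ k‖ * ‖Ac ^ k‖) := hbound k
      _ ≤ K * (s ^ k * s ^ k) := by
          have hn0 : (0:ℝ) ≤ ‖Ac ^ k‖ := norm_nonneg _
          have := mul_le_mul hk1 hk1 hn0 (by positivity)
          nlinarith
      _ = K * (s ^ 2) ^ k := by rw [← pow_add, ← pow_mul, two_mul]
  have h5 : K / |c| * (s ^ 2) ^ k < (d / s ^ 2) ^ k * (s ^ 2) ^ k :=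
    mul_lt_mul_of_pos_right hk2 hskpos
  rw [div_pow, div_mul_cancel₀ _ (ne_of_gt hskpos)] at h5
  have h6 := mul_lt_mul_of_pos_right h5 hcpos
  have h7 : K / |c| * (s ^ 2) ^ k * |c| = K * (s ^ 2) ^ k := by
    field_simp
  rw [h7] at h6
  linarith
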